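/- (Lemma 1, upper-bound direction in concrete form.) Let f ∈ ℂᴸ, let w₁, …, w_K ∈ ℂᴸ with w_k the desired beamformer for index k ∈ {1,…,K}, and let σ > 0. Define R = log(1 + |fᴴw_k|² / (Σ_{j≠k} |fᴴw_j|² + σ²)) and, for real α > −1 and complex β, h(α, β) = 2√(1+α)·Re(conj(β)·fᴴw_k) − α − |β|²·(Σ_{j=1}^{K} |fᴴw_j|² + σ²) + log(1+α). Then h(α, β) ≤ R for all α > −1 and all β ∈ ℂ. -/

import Mathlib

open Complex Finset

/-- The standard inner product `uᴴ v = ∑ ℓ conj(u ℓ) * v ℓ` on `ℂᴸ`. -/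
noncomputable def dotc {L : ℕ} (u v : Fin L → ℂ) : ℂ := ∑ l, (starRingEnd ℂ) (u l) * v l

theorem stmt_5 {L K : ℕ} (f : Fin L → ℂ) (w : Fin K → Fin L → ℂ) (k : Fin K)
    (σ : ℝ) (hσ : 0 < σ) (α : ℝ) (hα : -1 < α) (β : ℂ) :
    2 * Real.sqrt (1 + α) * ((starRingEnd ℂ) β * dotc f (w k)).re - α -
        ‖β‖ ^ 2 * ((∑ j, ‖dotc f (w j)‖ ^ 2) + σ ^ 2) +
        Real.log (1 + α) ≤
      Real.log (1 +
        ‖dotc f (w k)‖ ^ 2 /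
          ((∑ j ∈ Finset.univ.erase k, ‖dotc f (w j)‖ ^ 2) + σ ^ 2)) := by
  set c := dotc f (w k) with hc
  set a := ‖c‖ ^ 2 with ha
  set Ie := ∑ j ∈ Finset.univ.erase k, ‖dotc f (w j)‖ ^ 2 with hIe
  have hsum : (∑ j, ‖dotc f (w j)‖ ^ 2) = a + Ie := by
    rw [ha, hIe, hc, ← Finset.add_sum_erase _ _ (Finset.mem_univ k)]
  set I := Ie + σ ^ 2 with hI'
  set t := 1 + α with ht
  have ht0 : 0 < t := by simp only [ht]; linarith
  have ha0 : 0 ≤ a := sq_nonneg _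
  have hIe0 : 0 ≤ Ie := Finset.sum_nonneg fun j _ => sq_nonneg _
  have hI : 0 < I := by have := pow_pos hσ 2; simp only [hI']; linarith
  set D := a + I with hD'
  have hD : 0 < D := by simp only [hD']; linarith
  rw [hsum]
  have hDeq : a + Ie + σ ^ 2 = D := by rw [hD', hI']; ring
  rw [hDeq]
  have step1 : ((starRingEnd ℂ) β * c).re ≤ ‖β‖ * ‖c‖ := by
    calc ((starRingEnd ℂ) β * c).re ≤ ‖(starRingEnd ℂ) β * c‖ :=
          Complex.re_le_norm _
      _ = ‖β‖ * ‖c‖ := by rw [norm_mul, Complex.norm_conj]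
  have step2 : 2 * Real.sqrt t * (‖β‖ * ‖c‖)
      - ‖β‖ ^ 2 * D ≤ t * a / D := by
    rw [le_div_iff₀ hD]
    nlinarith [sq_nonneg (D * ‖β‖ - Real.sqrt t * ‖c‖),
      Real.sq_sqrt ht0.le, ha]
  have hRHS : 1 + a / I = D / I := by rw [hD']; field_simp; ring
  have key : Real.log (t * I / D) ≤ t * I / D - 1 :=
    Real.log_le_sub_one_of_pos (div_pos (mul_pos ht0 hI) hD)
  have hlog1 : Real.log (t * I / D) = Real.log t + Real.log I - Real.log D := by
    rw [Real.log_div (mul_pos ht0 hI).ne' hD.ne', Real.log_mul ht0.ne' hI.ne']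
  have hfrac : t * I / D = t - t * a / D := by
    field_simp [hD']; ring
  have hlog2 : Real.log (1 + a / I) = Real.log D - Real.log I := by
    rw [hRHS, Real.log_div hD.ne' hI.ne']
  have step3 : t * a / D - α + Real.log t ≤ Real.log (1 + a / I) := by
    rw [hlog2]
    have := key
    rw [hlog1, hfrac] at this
    simp only [ht] at *
    linarith
  have h1 : 2 * Real.sqrt t * ((starRingEnd ℂ) β * c).re
      ≤ 2 * Real.sqrt t * (‖β‖ * ‖c‖) := by
    have hs : 0 ≤ Real.sqrt t := Real.sqrt_nonneg _
    nlinarith [step1]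
  linarith
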